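/- Let L ≥ 2, k = (k_1,…,k_L) with all k_ℓ ≥ 1, s = (s_1,…,s_L) with all s_ℓ ≥ 1, and k := k_1 + Σ_{ℓ=2}^L (k_ℓ−1)S_ℓ where S_ℓ := s_1⋯s_{ℓ−1}. Set k′ := (k_1 + s_1(k_2−1), k_3, …, k_L), s′ := (s_1·s_2, s_3, …, s_L), and k̂_2 := (k − k_1)/s_1 + 1. Then F(k,s) = F(k′,s′) ∩ F((k_1, k̂_2), (s_1, 1)). -/

import Mathlib

/-- All monomials of `P` involve only `x^s` and `y^s`. -/
def MonoS (s : ℕ) (P : MvPolynomial (Fin 2) ℂ) : Prop :=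
  ∀ m ∈ P.support, s ∣ m 0 ∧ s ∣ m 1

/-- `S ℓ = s_1 ⋯ s_{ℓ-1}` (0-indexed: `Sp s i = ∏_{j<i} s j`, so `Sp s 0 = 1`). -/
def Sp (s : ℕ → ℕ) (i : ℕ) : ℕ := ∏ j ∈ Finset.range i, s j

/-- `F(k,s)`: homogeneous polynomials of degree `k-1` admitting a factorization
`P = P_L ⋯ P_1`, where `P_ℓ` is homogeneous of degree `S_ℓ(k_ℓ-1)` with all monomials
in `x^{S_ℓ}, y^{S_ℓ}` (layers are 0-indexed here). -/
def Fset (L : ℕ) (k s : ℕ → ℕ) : Set (MvPolynomial (Fin 2) ℂ) :=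
  { P | ∃ Q : ℕ → MvPolynomial (Fin 2) ℂ, P = ∏ i ∈ Finset.range L, Q i ∧
      ∀ i < L, (Q i).IsHomogeneous (Sp s i * (k i - 1)) ∧ MonoS (Sp s i) (Q i) }

open Polynomial MvPolynomial Finset

noncomputable def phi : MvPolynomial (Fin 2) ℂ →ₐ[ℂ] Polynomial ℂ :=
  MvPolynomial.aeval ![Polynomial.X, 1]

noncomputable def Hm (d : ℕ) (f : Polynomial ℂ) : MvPolynomial (Fin 2) ℂ :=
  ∑ i ∈ Finset.range (d + 1),
    MvPolynomial.C (f.coeff i) * MvPolynomial.X 0 ^ i * MvPolynomial.X 1 ^ (d - i)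

lemma Hm_homog (d : ℕ) (f : Polynomial ℂ) : (Hm d f).IsHomogeneous d := by
  apply MvPolynomial.IsHomogeneous.sum
  intro i hi
  simp only [Finset.mem_range] at hi
  have h1 : ((MvPolynomial.C (f.coeff i) : MvPolynomial (Fin 2) ℂ) * MvPolynomial.X 0 ^ i *
      MvPolynomial.X 1 ^ (d - i)).IsHomogeneous (0 + 1 * i + 1 * (d - i)) :=
    ((MvPolynomial.isHomogeneous_C _ _).mul
      ((MvPolynomial.isHomogeneous_X _ _).pow i)).mul
      ((MvPolynomial.isHomogeneous_X _ _).pow (d - i))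
  have h2 : 0 + 1 * i + 1 * (d - i) = d := by omega
  rwa [h2] at h1

lemma phi_Hm (d : ℕ) (f : Polynomial ℂ) (hf : f.natDegree ≤ d) : phi (Hm d f) = f := by
  have h := Polynomial.as_sum_range' f (d + 1) (by omega)
  rw [Hm, map_sum]
  conv_rhs => rw [h]
  apply Finset.sum_congr rfl
  intro i hi
  simp [phi, ← Polynomial.C_mul_X_pow_eq_monomial]

lemma fin2_degree (m : Fin 2 →₀ ℕ) : m.degree = m 0 + m 1 := by
  rw [Finsupp.degree_eq_weight_one]
  simp [Finsupp.weight, Finsupp.linearCombination, Finsupp.sum_fintype, Fin.sum_univ_two]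

lemma phi_monomial (m : Fin 2 →₀ ℕ) (c : ℂ) :
    phi (MvPolynomial.monomial m c) = Polynomial.C c * Polynomial.X ^ (m 0) := by
  rw [phi, MvPolynomial.aeval_monomial]
  rw [Finsupp.prod_fintype _ _ (fun i => by simp)]
  simp [Fin.prod_univ_two, Algebra.smul_def]

lemma monomial_eq_prod (m : Fin 2 →₀ ℕ) (c : ℂ) :
    (MvPolynomial.monomial m c : MvPolynomial (Fin 2) ℂ)
      = MvPolynomial.C c * MvPolynomial.X 0 ^ (m 0) * MvPolynomial.X 1 ^ (m 1) := by
  rw [MvPolynomial.monomial_eq]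
  rw [Finsupp.prod_fintype _ _ (fun i => by simp)]
  rw [Fin.prod_univ_two, mul_assoc]

lemma Hm_add (d : ℕ) (f g : Polynomial ℂ) : Hm d (f + g) = Hm d f + Hm d g := by
  simp [Hm, Finset.sum_add_distrib, add_mul]

lemma Hm_sum {α : Type*} (d : ℕ) (t : Finset α) (f : α → Polynomial ℂ) :
    Hm d (∑ a ∈ t, f a) = ∑ a ∈ t, Hm d (f a) := by
  classical
  induction t using Finset.induction with
  | empty => simp [Hm]
  | insert _ _ h ih => rw [Finset.sum_insert h, Finset.sum_insert h, Hm_add, ih]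

lemma Hm_CX (d j : ℕ) (c : ℂ) (hj : j ≤ d) :
    Hm d (Polynomial.C c * Polynomial.X ^ j)
      = MvPolynomial.C c * MvPolynomial.X 0 ^ j * MvPolynomial.X 1 ^ (d - j) := by
  rw [Hm]
  rw [Finset.sum_eq_single j]
  · simp
  · intro i hi hij
    simp [Polynomial.coeff_C_mul, Polynomial.coeff_X_pow, Ne.symm hij, hij]
  · intro h
    exact absurd (Finset.mem_range.2 (by omega)) h

lemma Hm_phi {d : ℕ} {P : MvPolynomial (Fin 2) ℂ} (hP : P.IsHomogeneous d) :
    Hm d (phi P) = P := by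
  have hrep := MvPolynomial.support_sum_monomial_coeff P
  conv_rhs => rw [← hrep]
  conv_lhs => rw [← hrep]
  rw [map_sum, Hm_sum]
  apply Finset.sum_congr rfl
  intro m hm
  have hc : MvPolynomial.coeff m P ≠ 0 := MvPolynomial.mem_support_iff.1 hm
  have hdeg : m 0 + m 1 = d := by
    have h2 := hP hc
    change (Finsupp.weight (fun _ => 1)) m = d at h2
    rw [← Finsupp.degree_eq_weight_one] at h2
    rw [← fin2_degree]; exact h2
  rw [phi_monomial, Hm_CX _ _ _ (by omega), monomial_eq_prod]
  have h3 : d - m 0 = m 1 := by omega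
  rw [h3]

lemma phi_inj {d : ℕ} {P Q : MvPolynomial (Fin 2) ℂ} (hP : P.IsHomogeneous d)
    (hQ : Q.IsHomogeneous d) (h : phi P = phi Q) : P = Q := by
  rw [← Hm_phi hP, ← Hm_phi hQ, h]

lemma phi_ne_zero {d : ℕ} {P : MvPolynomial (Fin 2) ℂ} (hP : P.IsHomogeneous d)
    (h : P ≠ 0) : phi P ≠ 0 := by
  intro h0
  exact h (phi_inj hP (MvPolynomial.isHomogeneous_zero _ _ d) (by simpa using h0))

lemma natDegree_phi_le {d : ℕ} {P : MvPolynomial (Fin 2) ℂ} (hP : P.IsHomogeneous d) :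
    (phi P).natDegree ≤ d := by
  have hrep := MvPolynomial.support_sum_monomial_coeff P
  conv_lhs => rw [← hrep]
  rw [map_sum]
  apply Polynomial.natDegree_sum_le_of_forall_le
  intro m hm
  rw [phi_monomial]
  refine (Polynomial.natDegree_C_mul_X_pow_le _ _).trans ?_
  have hc : MvPolynomial.coeff m P ≠ 0 := MvPolynomial.mem_support_iff.1 hm
  have h2 := hP hc
  change (Finsupp.weight (fun _ => 1)) m = d at h2
  rw [← Finsupp.degree_eq_weight_one, fin2_degree] at h2
  omega

lemma support_phi {P : MvPolynomial (Fin 2) ℂ} {n : ℕ} (hn : n ∈ (phi P).support) :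
    ∃ m ∈ P.support, m 0 = n := by
  classical
  by_contra hcon
  push_neg at hcon
  have hrep := MvPolynomial.support_sum_monomial_coeff P
  rw [← hrep, map_sum] at hn
  rw [Polynomial.mem_support_iff, Polynomial.finset_sum_coeff] at hn
  apply hn
  apply Finset.sum_eq_zero
  intro m hm
  rw [phi_monomial, Polynomial.coeff_C_mul, Polynomial.coeff_X_pow,
    if_neg (fun h => hcon m hm h.symm), mul_zero]

lemma Hm_mul {d1 d2 : ℕ} {f g : Polynomial ℂ} (hf : f.natDegree ≤ d1) (hg : g.natDegree ≤ d2) :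
    Hm (d1 + d2) (f * g) = Hm d1 f * Hm d2 g := by
  apply phi_inj (Hm_homog _ _) ((Hm_homog d1 f).mul (Hm_homog d2 g))
  rw [map_mul, phi_Hm _ _ hf, phi_Hm _ _ hg, phi_Hm]
  exact (Polynomial.natDegree_mul_le).trans (by omega)

lemma monoS_one_any (P : MvPolynomial (Fin 2) ℂ) : MonoS 1 P := fun _ _ => ⟨one_dvd _, one_dvd _⟩

lemma monoS_of_dvd {s t : ℕ} (h : s ∣ t) {P : MvPolynomial (Fin 2) ℂ} (hP : MonoS t P) :
    MonoS s P := fun m hm => ⟨h.trans (hP m hm).1, h.trans (hP m hm).2⟩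

lemma monoS_mul {s : ℕ} {P Q : MvPolynomial (Fin 2) ℂ} (hP : MonoS s P) (hQ : MonoS s Q) :
    MonoS s (P * Q) := by
  classical
  intro m hm
  have := MvPolynomial.support_mul P Q hm
  rw [Finset.mem_add] at this
  obtain ⟨a, ha, b, hb, rfl⟩ := this
  obtain ⟨h1, h2⟩ := hP a ha
  obtain ⟨h3, h4⟩ := hQ b hb
  exact ⟨by simpa using dvd_add h1 h3, by simpa using dvd_add h2 h4⟩

lemma monoS_prod {s : ℕ} {α : Type*} (t : Finset α) (f : α → MvPolynomial (Fin 2) ℂ)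
    (h : ∀ a ∈ t, MonoS s (f a)) : MonoS s (∏ a ∈ t, f a) := by
  classical
  induction t using Finset.induction with
  | empty =>
      intro m hm
      rw [Finset.prod_empty] at hm
      have h1 : MvPolynomial.coeff m (1 : MvPolynomial (Fin 2) ℂ) ≠ 0 :=
        MvPolynomial.mem_support_iff.mp hm
      have hm0 : m = 0 := by
        by_contra hne
        rw [MvPolynomial.coeff_one, if_neg (fun h => hne h.symm)] at h1
        exact h1 rfl
      rw [hm0]
      exact ⟨dvd_zero s, dvd_zero s⟩
  | insert _ _ hne ih =>
      rw [Finset.prod_insert hne]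
      exact monoS_mul (h _ (Finset.mem_insert_self _ _))
        (ih fun a ha => h a (Finset.mem_insert_of_mem ha))

lemma expand_contract_dvd {s : ℕ} (hs : s ≠ 0) (f : Polynomial ℂ)
    (h : ∀ n ∈ f.support, s ∣ n) : Polynomial.expand ℂ s (Polynomial.contract s f) = f := by
  ext n
  rw [Polynomial.coeff_expand (Nat.pos_of_ne_zero hs)]
  by_cases hd : s ∣ n
  · rw [if_pos hd, Polynomial.coeff_contract hs, Nat.div_mul_cancel hd]
  · rw [if_neg hd]
    by_contra hne
    exact hd (h n (Polynomial.mem_support_iff.2 fun h0 => hne h0.symm))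

lemma exists_expand_of_monoS {s : ℕ} (hs : s ≠ 0) {P : MvPolynomial (Fin 2) ℂ}
    (hP : MonoS s P) : ∃ g : Polynomial ℂ, phi P = Polynomial.expand ℂ s g := by
  refine ⟨Polynomial.contract s (phi P), (expand_contract_dvd hs _ ?_).symm⟩
  intro n hn
  obtain ⟨m, hm, rfl⟩ := support_phi hn
  exact (hP m hm).1

lemma Hm_eq_sum_monomial (d : ℕ) (f : Polynomial ℂ) :
    Hm d f = ∑ i ∈ Finset.range (d + 1),
      MvPolynomial.monomial (Finsupp.single (0 : Fin 2) i + Finsupp.single 1 (d - i))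
        (f.coeff i) := by
  rw [Hm]
  apply Finset.sum_congr rfl
  intro i _
  rw [monomial_eq_prod]
  congr 1 <;> simp

lemma support_Hm {d : ℕ} {f : Polynomial ℂ} {m : Fin 2 →₀ ℕ} (hm : m ∈ (Hm d f).support) :
    ∃ i ∈ f.support, i ≤ d ∧ m 0 = i ∧ m 1 = d - i := by
  classical
  rw [Hm_eq_sum_monomial] at hm
  have h1 := MvPolynomial.support_sum hm
  rw [Finset.mem_biUnion] at h1
  obtain ⟨i, hi, hmem⟩ := h1
  rw [Finset.mem_range] at hi
  have h2 := MvPolynomial.support_monomial_subset hmem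
  rw [Finset.mem_singleton] at h2
  subst h2
  have hc : f.coeff i ≠ 0 := by
    intro h0
    rw [h0, MvPolynomial.monomial_zero] at hmem
    simp at hmem
  exact ⟨i, Polynomial.mem_support_iff.2 hc, by omega, by simp, by simp⟩

lemma monoS_Hm_expand {s c : ℕ} (hs : s ≠ 0) (w : Polynomial ℂ) :
    MonoS s (Hm (s * c) (Polynomial.expand ℂ s w)) := by
  intro m hm
  obtain ⟨i, hi, hid, h0, h1⟩ := support_Hm hm
  have hdvd : s ∣ i := by
    rw [Polynomial.mem_support_iff, Polynomial.coeff_expand (Nat.pos_of_ne_zero hs)] at hi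
    by_contra hnd
    rw [if_neg hnd] at hi
    exact hi rfl
  constructor
  · rw [h0]; exact hdvd
  · rw [h1]
    exact Nat.dvd_sub (Dvd.intro c rfl) hdvd

lemma split_off (n : ℕ) : ∀ (b : Polynomial ℂ), b ≠ 0 → n ≤ b.natDegree →
    ∃ b1 b2 : Polynomial ℂ, b = b1 * b2 ∧ b1.natDegree = n := by
  induction n with
  | zero => exact fun b _ _ => ⟨1, b, (one_mul b).symm, Polynomial.natDegree_one⟩
  | succ n ih =>
      intro b hb hn
      have hdeg : 0 < b.degree := Polynomial.natDegree_pos_iff_degree_pos.mp (by omega)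
      obtain ⟨z, hz⟩ := Complex.exists_root hdeg
      obtain ⟨b', rfl⟩ := Polynomial.dvd_iff_isRoot.2 hz
      have hb' : b' ≠ 0 := fun h => hb (by rw [h, mul_zero])
      have hX : (Polynomial.X - Polynomial.C z) ≠ 0 := Polynomial.X_sub_C_ne_zero z
      have hnd : ((Polynomial.X - Polynomial.C z) * b').natDegree = 1 + b'.natDegree := by
        rw [Polynomial.natDegree_mul hX hb', Polynomial.natDegree_X_sub_C]
      obtain ⟨c1, c2, hc, hdc⟩ := ih b' hb' (by omega)
      refine ⟨(Polynomial.X - Polynomial.C z) * c1, c2, ?_, ?_⟩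
      · rw [mul_assoc, ← hc]
      · have hc1 : c1 ≠ 0 := fun h => hb' (by rw [hc, h, zero_mul])
        rw [Polynomial.natDegree_mul hX hc1, Polynomial.natDegree_X_sub_C, hdc]
        omega

lemma core_lemma {s : ℕ} (hs : 0 < s) {u t' r0 h : Polynomial ℂ}
    (hu : u ≠ 0) (hr0 : r0 ≠ 0) (ht : t' ≠ 0) (hh : h ≠ 0)
    (heq : u * Polynomial.expand ℂ s t' = r0 * Polynomial.expand ℂ s h)
    {a c : ℕ} (hdu : u.natDegree ≤ a + s * c) (hdr : r0.natDegree ≤ a) :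
    ∃ q0 w : Polynomial ℂ, u = q0 * Polynomial.expand ℂ s w ∧
      q0.natDegree ≤ a ∧ w.natDegree ≤ c := by
  set g := EuclideanDomain.gcd t' h with hg
  have hgt : g ∣ t' := EuclideanDomain.gcd_dvd_left t' h
  have hgh : g ∣ h := EuclideanDomain.gcd_dvd_right t' h
  obtain ⟨a', ha'⟩ := hgt
  obtain ⟨b', hb'⟩ := hgh
  have hgz : g ≠ 0 := fun h0 => ht (by rw [ha', h0, zero_mul])
  have hcop : IsCoprime a' b' := by
    obtain ⟨A, B, hbez⟩ : ∃ A B, g = t' * A + h * B :=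
      ⟨EuclideanDomain.gcdA t' h, EuclideanDomain.gcdB t' h, EuclideanDomain.gcd_eq_gcd_ab t' h⟩
    rw [ha', hb'] at hbez
    refine ⟨A, B, ?_⟩
    have h1 : g * 1 = g * (A * a' + B * b') := by
      rw [mul_one]
      calc g = g * a' * A + g * b' * B := hbez
      _ = g * (A * a' + B * b') := by ring
    exact (mul_left_cancel₀ hgz h1).symm
  have hcop2 : IsCoprime (Polynomial.expand ℂ s a') (Polynomial.expand ℂ s b') :=
    hcop.map (Polynomial.expand ℂ s).toRingHom
  have heq2 : u * Polynomial.expand ℂ s a' = r0 * Polynomial.expand ℂ s b' := by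
    have hEg : Polynomial.expand ℂ s g ≠ 0 := fun h0 => hgz (by
      simpa using (Polynomial.expand_eq_zero hs).1 h0)
    apply mul_left_cancel₀ hEg
    calc Polynomial.expand ℂ s g * (u * Polynomial.expand ℂ s a')
        = u * Polynomial.expand ℂ s (g * a') := by rw [map_mul]; ring
      _ = r0 * Polynomial.expand ℂ s (g * b') := by rw [← ha', ← hb']; exact heq
      _ = Polynomial.expand ℂ s g * (r0 * Polynomial.expand ℂ s b') := by rw [map_mul]; ring
  have hdvd : Polynomial.expand ℂ s a' ∣ r0 := by
    apply hcop2.dvd_of_dvd_mul_right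
    exact ⟨u, by rw [← heq2]; ring⟩
  obtain ⟨ρ, hρ⟩ := hdvd
  have hu2 : u = ρ * Polynomial.expand ℂ s b' := by
    have hEa : Polynomial.expand ℂ s a' ≠ 0 := fun h0 => by
      have := (Polynomial.expand_eq_zero hs).1 h0
      rw [this, mul_zero] at ha'
      exact ht (by rw [ha'])
    apply mul_left_cancel₀ hEa
    calc Polynomial.expand ℂ s a' * u = u * Polynomial.expand ℂ s a' := mul_comm _ _
      _ = r0 * Polynomial.expand ℂ s b' := heq2
      _ = Polynomial.expand ℂ s a' * ρ * Polynomial.expand ℂ s b' := by rw [hρ]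
      _ = Polynomial.expand ℂ s a' * (ρ * Polynomial.expand ℂ s b') := by ring
  have hρz : ρ ≠ 0 := fun h0 => hu (by rw [hu2, h0, zero_mul])
  have hb'z : b' ≠ 0 := fun h0 => hh (by rw [hb', h0, mul_zero])
  have hρdeg : ρ.natDegree ≤ a := by
    have hd1 : ρ ∣ r0 := ⟨Polynomial.expand ℂ s a', by rw [hρ]; ring⟩
    have := Polynomial.natDegree_le_of_dvd hd1 hr0
    omega
  set n := min c b'.natDegree with hn
  obtain ⟨b1, b2, hb12, hb1deg⟩ := split_off n b' hb'z (by omega)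
  have hb1z : b1 ≠ 0 := fun h0 => hb'z (by rw [hb12, h0, zero_mul])
  have hb2z : b2 ≠ 0 := fun h0 => hb'z (by rw [hb12, h0, mul_zero])
  refine ⟨ρ * Polynomial.expand ℂ s b2, b1, ?_, ?_, by omega⟩
  · rw [hu2, hb12, map_mul]; ring
  · have hEb2 : (Polynomial.expand ℂ s b2).natDegree = s * b2.natDegree := by
      rw [Polynomial.natDegree_expand]; ring
    have hEb2z : Polynomial.expand ℂ s b2 ≠ 0 := fun h0 => hb2z ((Polynomial.expand_eq_zero hs).1 h0)
    have hqdeg : (ρ * Polynomial.expand ℂ s b2).natDegree = ρ.natDegree + s * b2.natDegree := by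
      rw [Polynomial.natDegree_mul hρz hEb2z, hEb2]
    have hudeg : u.natDegree = ρ.natDegree + s * b'.natDegree := by
      rw [hu2, Polynomial.natDegree_mul hρz (fun h0 => hb'z ((Polynomial.expand_eq_zero hs).1 h0)),
        Polynomial.natDegree_expand]
      ring
    have hbdeg : b'.natDegree = n + b2.natDegree := by
      rw [hb12, Polynomial.natDegree_mul hb1z hb2z, hb1deg]
    rw [hqdeg]
    rcases Nat.le_total c b'.natDegree with hle | hle
    · have hnc : n = c := by omega
      have : s * b'.natDegree = s * c + s * b2.natDegree := by
        rw [hbdeg, hnc]; ring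
      omega
    · have hnb : n = b'.natDegree := by omega
      have hb20 : b2.natDegree = 0 := by omega
      rw [hb20, mul_zero]
      omega

lemma monoS_zero (s : ℕ) : MonoS s (0 : MvPolynomial (Fin 2) ℂ) := by
  intro m hm
  simp at hm

lemma Sp_zero (s : ℕ → ℕ) : Sp s 0 = 1 := by simp [Sp]

lemma Sp_one (s : ℕ → ℕ) : Sp s 1 = s 0 := by simp [Sp]

lemma Sp_succ (s : ℕ → ℕ) (i : ℕ) : Sp s (i + 1) = Sp s i * s i := Finset.prod_range_succ s i

lemma dvd_Sp (s : ℕ → ℕ) (i : ℕ) (hi : 1 ≤ i) : s 0 ∣ Sp s i :=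
  Finset.dvd_prod_of_mem s (Finset.mem_range.2 (by omega))

lemma Sp_shift (s s' : ℕ → ℕ) (hs'0 : s' 0 = s 0 * s 1) (hs' : ∀ i, 1 ≤ i → s' i = s (i + 1)) :
    ∀ i, 1 ≤ i → Sp s' i = Sp s (i + 1) := by
  intro i hi
  induction i with
  | zero => omega
  | succ n ih =>
      rcases Nat.eq_zero_or_pos n with hn | hn
      · subst hn
        rw [Sp_succ, Sp_zero, Sp_succ, Sp_succ, Sp_zero, hs'0]
        ring
      · rw [Sp_succ, ih hn, hs' n hn, ← Sp_succ]

lemma prod_shift_Ico {M : Type*} [CommMonoid M] (f : ℕ → M) (L : ℕ) (hL : 1 ≤ L) :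
    ∏ i ∈ Finset.Ico 2 L, f (i - 1) = ∏ i ∈ Finset.Ico 1 (L - 1), f i := by
  have h := Finset.prod_Ico_add' (fun j => f (j - 1)) 1 (L - 1) 1
  simp only [Nat.add_sub_cancel] at h
  have h2 : L - 1 + 1 = L := by omega
  rw [h2] at h
  exact h.symm

theorem stmt_9 (L : ℕ) (hL : 2 ≤ L) (k s : ℕ → ℕ)
    (hk : ∀ i < L, 1 ≤ k i) (hs : ∀ i < L, 1 ≤ s i)
    (K : ℕ) (hK : K = k 0 + ∑ i ∈ Finset.Ico 1 L, (k i - 1) * Sp s i)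
    (k' s' : ℕ → ℕ)
    (hk'0 : k' 0 = k 0 + s 0 * (k 1 - 1)) (hk' : ∀ i, 1 ≤ i → k' i = k (i + 1))
    (hs'0 : s' 0 = s 0 * s 1) (hs' : ∀ i, 1 ≤ i → s' i = s (i + 1))
    (khat : ℕ) (hkhat : khat = (K - k 0) / s 0 + 1) :
    Fset L k s = Fset (L - 1) k' s' ∩
      Fset 2 (fun i => if i = 0 then k 0 else khat) (fun i => if i = 0 then s 0 else 1) := by
  have hk0 : 1 ≤ k 0 := hk 0 (by omega)
  have hk1 : 1 ≤ k 1 := hk 1 (by omega)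
  have hs0 : 1 ≤ s 0 := hs 0 (by omega)
  have hSp1 : Sp s 1 = s 0 := Sp_one s
  have hSps' := Sp_shift s s' hs'0 hs'
  -- sum identity : s 0 * (khat - 1) = ∑ i ∈ Ico 1 L, Sp s i * (k i - 1)
  have hdvdK : s 0 ∣ K - k 0 := by
    have h1 : K - k 0 = ∑ i ∈ Finset.Ico 1 L, (k i - 1) * Sp s i := by omega
    rw [h1]
    apply Finset.dvd_sum
    intro i hi
    rw [Finset.mem_Ico] at hi
    exact Dvd.dvd.mul_left (dvd_Sp s i hi.1) _
  have hkhat1 : s 0 * (khat - 1) = K - k 0 := by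
    rw [hkhat]
    simp only [Nat.add_sub_cancel]
    exact Nat.mul_div_cancel' hdvdK
  have hsum : s 0 * (khat - 1) = ∑ i ∈ Finset.Ico 1 L, Sp s i * (k i - 1) := by
    rw [hkhat1]
    have h1 : K - k 0 = ∑ i ∈ Finset.Ico 1 L, (k i - 1) * Sp s i := by omega
    rw [h1]
    exact Finset.sum_congr rfl fun i _ => mul_comm _ _
  ext P
  simp only [Set.mem_inter_iff]
  constructor
  · rintro ⟨Q, hPQ, hQ⟩
    constructor
    · refine ⟨fun i => if i = 0 then Q 0 * Q 1 else Q (i + 1), ?_, ?_⟩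
      · rw [hPQ]
        rw [Finset.range_eq_Ico, Finset.range_eq_Ico, Finset.prod_eq_prod_Ico_succ_bot (by omega : 0 < L - 1)]
        rw [if_pos rfl]
        have h1 : ∏ i ∈ Finset.Ico (0 + 1) (L - 1),
            (if i = 0 then Q 0 * Q 1 else Q (i + 1)) = ∏ i ∈ Finset.Ico 1 (L - 1), Q (i + 1) := by
          apply Finset.prod_congr (by norm_num)
          intro i hi
          rw [Finset.mem_Ico] at hi
          rw [if_neg (by omega)]
        rw [h1]
        have h2 : ∏ i ∈ Finset.Ico 1 (L - 1), Q (i + 1) = ∏ i ∈ Finset.Ico 2 L, Q i := by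
          have h := Finset.prod_Ico_add' Q 1 (L - 1) 1
          have h3 : L - 1 + 1 = L := by omega
          rw [h3] at h
          exact h
        rw [h2]
        rw [Finset.prod_eq_prod_Ico_succ_bot (by omega : 0 < L) Q,
          Finset.prod_eq_prod_Ico_succ_bot (by omega : 1 < L) Q]
        rw [mul_assoc]
      · intro i hi
        by_cases h0 : i = 0
        · subst h0
          beta_reduce
          rw [if_pos rfl]
          constructor
          · have hh := ((hQ 0 (by omega)).1).mul ((hQ 1 (by omega)).1)
            have he : Sp s 0 * (k 0 - 1) + Sp s 1 * (k 1 - 1) = Sp s' 0 * (k' 0 - 1) := by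
              rw [Sp_zero, Sp_zero, hSp1, hk'0]
              have : k 0 + s 0 * (k 1 - 1) - 1 = (k 0 - 1) + s 0 * (k 1 - 1) := by omega
              rw [this]
              ring
            rwa [he] at hh
          · rw [Sp_zero]
            exact monoS_one_any _
        · beta_reduce
          rw [if_neg h0]
          have h1 : 1 ≤ i := by omega
          rw [hSps' i h1, hk' i h1]
          exact hQ (i + 1) (by omega)
    · have hSpA : Sp (fun i => if i = 0 then s 0 else 1) 0 = 1 := Sp_zero _
      have hSpB : Sp (fun i => if i = 0 then s 0 else 1) 1 = s 0 := by
        rw [Sp_one]; simp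
      refine ⟨fun i => if i = 0 then Q 0 else ∏ j ∈ Finset.Ico 1 L, Q j, ?_, ?_⟩
      · rw [Finset.prod_range_succ, Finset.prod_range_one]
        beta_reduce
        rw [if_pos rfl, if_neg (by omega)]
        rw [hPQ, Finset.range_eq_Ico, Finset.prod_eq_prod_Ico_succ_bot (by omega : 0 < L) Q]
      · intro i hi
        interval_cases i
        · beta_reduce
          rw [if_pos rfl, if_pos rfl, hSpA, one_mul]
          have := hQ 0 (by omega)
          rw [Sp_zero, one_mul] at this
          exact ⟨this.1, monoS_one_any _⟩
        · beta_reduce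
          rw [if_neg (by omega), if_neg (by omega), hSpB]
          constructor
          · have hh := MvPolynomial.IsHomogeneous.prod (Finset.Ico 1 L) Q
              (fun j => Sp s j * (k j - 1)) (fun j hj => (hQ j (by
                rw [Finset.mem_Ico] at hj; omega)).1)
            rwa [← hsum] at hh
          · apply monoS_prod
            intro j hj
            rw [Finset.mem_Ico] at hj
            exact monoS_of_dvd (dvd_Sp s j hj.1) (hQ j (by omega)).2
  · rintro ⟨⟨Q', hP', hQ'⟩, R, hPR, hR⟩
    classical
    -- tail conditions
    have tail_cond : ∀ i, 2 ≤ i → i < L →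
        (Q' (i - 1)).IsHomogeneous (Sp s i * (k i - 1)) ∧ MonoS (Sp s i) (Q' (i - 1)) := by
      intro i h2 hiL
      have h1 : 1 ≤ i - 1 := by omega
      have h3 : i - 1 < L - 1 := by omega
      have := hQ' (i - 1) h3
      rwa [hSps' (i - 1) h1, hk' (i - 1) h1, (by omega : i - 1 + 1 = i)] at this
    set T : MvPolynomial (Fin 2) ℂ := ∏ i ∈ Finset.Ico 1 (L - 1), Q' i with hT
    have hP'2 : P = Q' 0 * T := by
      rw [hP', Finset.range_eq_Ico, Finset.prod_eq_prod_Ico_succ_bot (by omega : 0 < L - 1) Q']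
    have hPR2 : P = R 0 * R 1 := by
      rw [hPR, Finset.prod_range_succ, Finset.prod_range_one]
    have hprod_tail : ∏ i ∈ Finset.Ico 2 L, Q' (i - 1) = T := prod_shift_Ico Q' L (by omega)
    -- homogeneity facts
    have hThom : T.IsHomogeneous (∑ i ∈ Finset.Ico 1 (L - 1), Sp s' i * (k' i - 1)) :=
      MvPolynomial.IsHomogeneous.prod _ _ _ (fun i hi => (hQ' i (by
        rw [Finset.mem_Ico] at hi; omega)).1)
    have hTmono : MonoS (s 0) T := by
      apply monoS_prod
      intro i hi
      rw [Finset.mem_Ico] at hi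
      have hd : s 0 ∣ Sp s' i := by
        rw [hSps' i hi.1]
        exact dvd_Sp s (i + 1) (by omega)
      exact monoS_of_dvd hd (hQ' i (by omega)).2
    have hQ'0 := hQ' 0 (by omega)
    have hd0 : Sp s' 0 * (k' 0 - 1) = (k 0 - 1) + s 0 * (k 1 - 1) := by
      rw [Sp_zero, one_mul, hk'0]
      omega
    have hQ'0hom : (Q' 0).IsHomogeneous ((k 0 - 1) + s 0 * (k 1 - 1)) := hd0 ▸ hQ'0.1
    have hR0 := hR 0 (by omega)
    have hR1 := hR 1 (by omega)
    have hR0hom : (R 0).IsHomogeneous (k 0 - 1) := by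
      have := hR0.1
      beta_reduce at this
      rwa [Sp_zero, one_mul, if_pos rfl] at this
    have hR1hom : (R 1).IsHomogeneous (s 0 * (khat - 1)) := by
      have := hR1.1
      beta_reduce at this
      rwa [Sp_one, if_pos rfl, if_neg (by omega)] at this
    have hR1mono : MonoS (s 0) (R 1) := by
      have := hR1.2
      beta_reduce at this
      rwa [Sp_one, if_pos rfl] at this
    by_cases hP0 : P = 0
    · -- degenerate case
      refine ⟨fun i => if i = 0 then 0 else if i = 1 then 0 else Q' (i - 1), ?_, ?_⟩
      · rw [hP0]
        symm
        apply Finset.prod_eq_zero (Finset.mem_range.2 (by omega : 0 < L))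
        simp
      · intro i hi
        by_cases h0 : i = 0
        · subst h0
          beta_reduce
          rw [if_pos rfl]
          exact ⟨MvPolynomial.isHomogeneous_zero _ _ _, monoS_zero _⟩
        · by_cases h1 : i = 1
          · subst h1
            beta_reduce
            rw [if_neg (by omega), if_pos rfl]
            exact ⟨MvPolynomial.isHomogeneous_zero _ _ _, monoS_zero _⟩
          · beta_reduce
            rw [if_neg h0, if_neg h1]
            exact tail_cond i (by omega) hi
    · -- main case
      have hQ'0z : Q' 0 ≠ 0 := fun h => hP0 (by rw [hP'2, h, zero_mul])
      have hTz : T ≠ 0 := fun h => hP0 (by rw [hP'2, h, mul_zero])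
      have hR0z : R 0 ≠ 0 := fun h => hP0 (by rw [hPR2, h, zero_mul])
      have hR1z : R 1 ≠ 0 := fun h => hP0 (by rw [hPR2, h, mul_zero])
      have hs0ne : s 0 ≠ 0 := by omega
      obtain ⟨t', ht'⟩ := exists_expand_of_monoS hs0ne hTmono
      obtain ⟨h, hh⟩ := exists_expand_of_monoS hs0ne hR1mono
      have ht'z : t' ≠ 0 := by
        intro h0
        rw [h0, map_zero] at ht'
        exact phi_ne_zero hThom hTz ht'
      have hhz : h ≠ 0 := by
        intro h0
        rw [h0, map_zero] at hh
        exact phi_ne_zero hR1hom hR1z hh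
      have huz : phi (Q' 0) ≠ 0 := phi_ne_zero hQ'0hom hQ'0z
      have hr0z : phi (R 0) ≠ 0 := phi_ne_zero hR0hom hR0z
      have heq : phi (Q' 0) * Polynomial.expand ℂ (s 0) t'
          = phi (R 0) * Polynomial.expand ℂ (s 0) h := by
        rw [← ht', ← hh, ← map_mul, ← map_mul, ← hP'2, ← hPR2]
      have hdu : (phi (Q' 0)).natDegree ≤ (k 0 - 1) + s 0 * (k 1 - 1) :=
        natDegree_phi_le hQ'0hom
      have hdr : (phi (R 0)).natDegree ≤ k 0 - 1 := natDegree_phi_le hR0hom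
      obtain ⟨q0, w, hu, hq0deg, hwdeg⟩ :=
        core_lemma (by omega : 0 < s 0) huz hr0z ht'z hhz heq hdu hdr
      set Q0 : MvPolynomial (Fin 2) ℂ := Hm (k 0 - 1) q0 with hQ0
      set Q1 : MvPolynomial (Fin 2) ℂ := Hm (s 0 * (k 1 - 1)) (Polynomial.expand ℂ (s 0) w)
        with hQ1
      have hQ0Q1 : Q0 * Q1 = Q' 0 := by
        rw [hQ0, hQ1, ← Hm_mul hq0deg (by
          rw [Polynomial.natDegree_expand]
          calc w.natDegree * s 0 ≤ (k 1 - 1) * s 0 := Nat.mul_le_mul_right _ hwdeg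
          _ = s 0 * (k 1 - 1) := mul_comm _ _), ← hu]
        exact Hm_phi hQ'0hom
      refine ⟨fun i => if i = 0 then Q0 else if i = 1 then Q1 else Q' (i - 1), ?_, ?_⟩
      · rw [Finset.range_eq_Ico, Finset.prod_eq_prod_Ico_succ_bot (by omega : 0 < L),
          Finset.prod_eq_prod_Ico_succ_bot (by omega : 0 + 1 < L)]
        beta_reduce
        rw [if_pos rfl, if_neg (by omega), if_pos rfl]
        have h1 : ∏ i ∈ Finset.Ico (0 + 1 + 1) L,
            (if i = 0 then Q0 else if i = 1 then Q1 else Q' (i - 1)) = T := by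
          rw [← hprod_tail]
          apply Finset.prod_congr (by norm_num)
          intro i hi
          rw [Finset.mem_Ico] at hi
          rw [if_neg (by omega), if_neg (by omega)]
        rw [h1, ← mul_assoc, hQ0Q1, ← hP'2]
      · intro i hi
        by_cases h0 : i = 0
        · subst h0
          beta_reduce
          rw [if_pos rfl]
          constructor
          · have := Hm_homog (k 0 - 1) q0
            rwa [(by rw [Sp_zero, one_mul] : Sp s 0 * (k 0 - 1) = k 0 - 1)]
          · rw [Sp_zero]
            exact monoS_one_any _
        · by_cases h1 : i = 1
          · subst h1
            beta_reduce
            rw [if_neg (by omega), if_pos rfl, hSp1]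
            exact ⟨Hm_homog _ _, monoS_Hm_expand hs0ne w⟩
          · beta_reduce
            rw [if_neg h0, if_neg h1]
            exact tail_cond i (by omega) hi
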